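/- Let y ∈ ℝ^m be nonzero and let d ∈ ℝ^m with ‖d‖ = 1. Then d(y/‖y‖, cone{d}) ≤ (‖(y,1)‖/‖y‖) · d((y,1)/‖(y,1)‖, cone{(d,0)}). -/

import Mathlib

open Metric Set

noncomputable section

/-- `ℝ^m` as a Euclidean space. -/
abbrev Em (m : ℕ) := EuclideanSpace ℝ (Fin m)

/-- `ℝ^(m+1)` realized as the L²-product `ℝ^m × ℝ`. -/
abbrev Em1 (m : ℕ) := WithLp 2 (Em m × ℝ)

/-- The ray `cone {v} = {λ • v : λ ≥ 0}`. -/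
def ray {V : Type*} [AddCommMonoid V] [Module ℝ V] (v : V) : Set V :=
  {x | ∃ l : ℝ, 0 ≤ l ∧ x = l • v}

/-- The vector `(y, 1) ∈ ℝ^(m+1)` obtained by appending a last coordinate `1` to `y`. -/
def lift1 {m : ℕ} (y : Em m) : Em1 m := (WithLp.equiv 2 (Em m × ℝ)).symm (y, 1)

/-- The vector `(y, 0) ∈ ℝ^(m+1)` obtained by appending a last coordinate `0` to `y`. -/
def lift0 {m : ℕ} (y : Em m) : Em1 m := (WithLp.equiv 2 (Em m × ℝ)).symm (y, 0)

/-- For nonzero `y` and unit `d`,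
`d(y/‖y‖, cone{d}) ≤ (‖(y,1)‖/‖y‖) · d((y,1)/‖(y,1)‖, cone{(d,0)})`. -/
theorem dist_unit_to_ray_le_scaled_lifted_dist {m : ℕ} (y d : Em m) (hy : y ≠ 0)
    (hd : ‖d‖ = 1) :
    infDist (‖y‖⁻¹ • y) (ray d) ≤
      (‖lift1 y‖ / ‖y‖) * infDist (‖lift1 y‖⁻¹ • lift1 y) (ray (lift0 d)) := by
  have hny : (0:ℝ) < ‖y‖ := norm_pos_iff.mpr hy
  have hY2 : ‖lift1 y‖ ^ 2 = ‖y‖ ^ 2 + 1 := by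
    rw [WithLp.prod_norm_sq_eq_of_L2]
    simp [lift1]
  have hY : (0:ℝ) < ‖lift1 y‖ := by nlinarith [norm_nonneg (lift1 y)]
  have hc : (0:ℝ) < ‖lift1 y‖ / ‖y‖ := div_pos hY hny
  rw [← div_le_iff₀' hc]
  by_contra h
  push_neg at h
  have hne : (ray (lift0 d)).Nonempty := ⟨0, 0, le_refl 0, by simp⟩
  obtain ⟨p, hp, hlt⟩ := (infDist_lt_iff hne).mp h
  obtain ⟨l, hl, rfl⟩ := hp
  set w : Em m := y - (l * ‖lift1 y‖) • d with hw
  -- estimate on the lifted distance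
  have hsub : ‖lift1 y‖⁻¹ • lift1 y - l • lift0 d
      = ‖lift1 y‖⁻¹ • ((WithLp.equiv 2 (Em m × ℝ)).symm (w, 1)) := by
    have h1 : (WithLp.equiv 2 (Em m × ℝ)).symm (w, 1)
        = lift1 y - (l * ‖lift1 y‖) • lift0 d := by
      simp only [lift1, lift0]
      rw [← WithLp.toLp_smul, ← WithLp.toLp_sub]
      congr 1
      simp [hw, lift1, Prod.smul_mk, Prod.mk_sub_mk]
    rw [h1, smul_sub, smul_smul]
    congr 2
    field_simp
  have hvw : ‖w‖ ≤ ‖(WithLp.equiv 2 (Em m × ℝ)).symm (w, 1)‖ := by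
    have h2 : ‖(WithLp.equiv 2 (Em m × ℝ)).symm (w, 1)‖ ^ 2 = ‖w‖ ^ 2 + 1 := by
      rw [WithLp.prod_norm_sq_eq_of_L2]; simp
    nlinarith [norm_nonneg ((WithLp.equiv 2 (Em m × ℝ)).symm (w, (1:ℝ))), norm_nonneg w]
  have hdistp : ‖lift1 y‖⁻¹ * ‖w‖ ≤ dist (‖lift1 y‖⁻¹ • lift1 y) (l • lift0 d) := by
    rw [dist_eq_norm, hsub, norm_smul, Real.norm_eq_abs, abs_of_pos (inv_pos.mpr hY)]
    exact mul_le_mul_of_nonneg_left hvw (by positivity)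
  -- estimate on the base distance
  have hmem : (l * ‖lift1 y‖ / ‖y‖) • d ∈ ray d := ⟨_, by positivity, rfl⟩
  have hbase : infDist (‖y‖⁻¹ • y) (ray d) ≤ ‖y‖⁻¹ * ‖w‖ := by
    refine le_trans (infDist_le_dist_of_mem hmem) ?_
    rw [dist_eq_norm]
    have : ‖y‖⁻¹ • y - (l * ‖lift1 y‖ / ‖y‖) • d = ‖y‖⁻¹ • w := by
      rw [hw, smul_sub, smul_smul]
      congr 2
      field_simp
    rw [this, norm_smul, Real.norm_eq_abs, abs_of_pos (inv_pos.mpr hny)]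
  -- combine
  have hlt' : dist (‖lift1 y‖⁻¹ • lift1 y) (l • lift0 d)
      < infDist (‖y‖⁻¹ • y) (ray d) / (‖lift1 y‖ / ‖y‖) := hlt
  rw [lt_div_iff₀ hc] at hlt'
  have : (‖lift1 y‖ / ‖y‖) * (‖lift1 y‖⁻¹ * ‖w‖) = ‖y‖⁻¹ * ‖w‖ := by
    field_simp
  nlinarith [mul_le_mul_of_nonneg_left hdistp (le_of_lt hc)]
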